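/- arXiv:2504.04878 — 5 statements merged into one kernel-verified Lean document; each statement's English description precedes it below -/
import Mathlib

section
/- Let λ₁,...,λ₆ ∈ ℝ and let g₁₁, g₃₃, g₄₄, g₆₆ > 0. Set Λ := λ₁·A₁ + λ₂·A₂ + λ₃·A₃ + λ₄·A₄ + λ₅·A₅ + λ₆·A₆ and u := (λ₁/g₁₁)·A₁ + (λ₂/g₁₁)·A₂ + (λ₃/g₃₃)·A₃ + (λ₄/g₄₄)·A₄ + (λ₅/g₄₄)·A₅ + (λ₆/g₆₆)·A₆. Then the Frobenius pairing of the momentum with the commutator along the fiber direction vanishes: trace(Λ · (u·A₆ − A₆·u)ᵀ) = 0. (Hence along geodesics of any left-invariant metric diagonal in this basis with g₁₁ = g₂₂ and g₄₄ = g₅₅, the momentum component λ₆ and velocity component u⁶ are constant.) -/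
noncomputable section

open Matrix

/-- Basis of `se(3)`: translation generators. -/
def A₁ : Matrix (Fin 4) (Fin 4) ℝ :=
  !![0, 0, 0, 1; 0, 0, 0, 0; 0, 0, 0, 0; 0, 0, 0, 0]
def A₂ : Matrix (Fin 4) (Fin 4) ℝ :=
  !![0, 0, 0, 0; 0, 0, 0, 1; 0, 0, 0, 0; 0, 0, 0, 0]
def A₃ : Matrix (Fin 4) (Fin 4) ℝ :=
  !![0, 0, 0, 0; 0, 0, 0, 0; 0, 0, 0, 1; 0, 0, 0, 0]
/-- Rotation generators: upper-left 3×3 blocks `[e_x]ₓ`, `[e_y]ₓ`, `[e_z]ₓ`. -/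
def A₄ : Matrix (Fin 4) (Fin 4) ℝ :=
  !![0, 0, 0, 0; 0, 0, -1, 0; 0, 1, 0, 0; 0, 0, 0, 0]
def A₅ : Matrix (Fin 4) (Fin 4) ℝ :=
  !![0, 0, 1, 0; 0, 0, 0, 0; -1, 0, 0, 0; 0, 0, 0, 0]
def A₆ : Matrix (Fin 4) (Fin 4) ℝ :=
  !![0, -1, 0, 0; 1, 0, 0, 0; 0, 0, 0, 0; 0, 0, 0, 0]

/-- The Frobenius pairing of the momentum `Λ` with the commutator
`⁅u, A₆⁆` of the Riemannian velocity `u = 𝒢⁻¹λ` with the fiber direction `A₆` vanishes: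
this encodes the Poisson bracket computation `{𝔥_R, λ₆} = 0`, so the momentum component
`λ₆` and velocity component `u⁶` are constant along Riemannian geodesics of any
left-invariant metric diagonal in this basis with `g₁₁ = g₂₂` and `g₄₄ = g₅₅`. -/
theorem stmt_3 (l₁ l₂ l₃ l₄ l₅ l₆ : ℝ) (g₁₁ g₃₃ g₄₄ g₆₆ : ℝ)
    (hg₁₁ : 0 < g₁₁) (hg₃₃ : 0 < g₃₃) (hg₄₄ : 0 < g₄₄) (hg₆₆ : 0 < g₆₆)
    (Lam u : Matrix (Fin 4) (Fin 4) ℝ)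
    (hLam : Lam = l₁ • A₁ + l₂ • A₂ + l₃ • A₃ + l₄ • A₄ + l₅ • A₅ + l₆ • A₆)
    (hu : u = (l₁ / g₁₁) • A₁ + (l₂ / g₁₁) • A₂ + (l₃ / g₃₃) • A₃ +
        (l₄ / g₄₄) • A₄ + (l₅ / g₄₄) • A₅ + (l₆ / g₆₆) • A₆) :
    Matrix.trace (Lam * (u * A₆ - A₆ * u)ᵀ) = 0 := by
  subst hLam hu
  simp only [A₁, A₂, A₃, A₄, A₅, A₆]
  simp [Matrix.trace, Matrix.diag, Fin.sum_univ_four, Matrix.mul_apply,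
    Matrix.transpose_apply, Matrix.add_apply, Matrix.sub_apply, Matrix.smul_apply,
    Matrix.of_apply, Matrix.cons_val', Matrix.cons_val_zero, Matrix.cons_val_one,
    Matrix.head_cons, Matrix.empty_val', Matrix.cons_val_fin_one, Matrix.head_fin_const,
    Matrix.transpose, Matrix.vecHead, Matrix.vecTail, Matrix.cons_val_two, Matrix.cons_val_three,
    Fin.isValue, Function.comp]
  ring
end
end

section
/- Let λ₃, λ₄, λ₅ ∈ ℝ, let λ₁, λ₂, λ₆ ∈ ℝ, and let g₃₃, g₄₄ > 0. Set Λ := λ₁·A₁ + λ₂·A₂ + λ₃·A₃ + λ₄·A₄ + λ₅·A₅ + λ₆·A₆ and the sub-Riemannian horizontal velocity u := (λ₃/g₃₃)·A₃ + (λ₄/g₄₄)·A₄ + (λ₅/g₄₄)·A₅. Then u·A₆ − A₆·u = (λ₅/g₄₄)·A₄ − (λ₄/g₄₄)·A₅, and the Frobenius pairing vanishes: trace(Λ · (u·A₆ − A₆·u)ᵀ) = 0. -/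
set_option maxHeartbeats 2000000
noncomputable section

open Matrix

/-- Sub-Riemannian case: for the horizontal velocity
`u = (λ₃/g₃₃)·A₃ + (λ₄/g₄₄)·A₄ + (λ₅/g₄₄)·A₅` (constrained to the distribution `Δ`
spanned by `A₃, A₄, A₅`) one has `u·A₆ − A₆·u = (λ₅/g₄₄)·A₄ − (λ₄/g₄₄)·A₅`, and the
Frobenius pairing of the momentum `Λ` with this commutator vanishes
(the Poisson bracket computation `{𝔥_SR, λ₆} = 0`). -/
theorem stmt_4 (l₃ l₄ l₅ : ℝ) (l₁ l₂ l₆ : ℝ) (g₃₃ g₄₄ : ℝ)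
    (hg₃₃ : 0 < g₃₃) (hg₄₄ : 0 < g₄₄)
    (Lam u : Matrix (Fin 4) (Fin 4) ℝ)
    (hLam : Lam = l₁ • A₁ + l₂ • A₂ + l₃ • A₃ + l₄ • A₄ + l₅ • A₅ + l₆ • A₆)
    (hu : u = (l₃ / g₃₃) • A₃ + (l₄ / g₄₄) • A₄ + (l₅ / g₄₄) • A₅) :
    u * A₆ - A₆ * u = (l₅ / g₄₄) • A₄ - (l₄ / g₄₄) • A₅ ∧
    Matrix.trace (Lam * (u * A₆ - A₆ * u)ᵀ) = 0 := by
  subst hLam hu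
  have h1 : (((l₃ / g₃₃) • A₃ + (l₄ / g₄₄) • A₄ + (l₅ / g₄₄) • A₅) * A₆ -
      A₆ * ((l₃ / g₃₃) • A₃ + (l₄ / g₄₄) • A₄ + (l₅ / g₄₄) • A₅)) =
      (l₅ / g₄₄) • A₄ - (l₄ / g₄₄) • A₅ := by
    ext i j
    fin_cases i <;> fin_cases j <;>
      simp [A₃, A₄, A₅, A₆, Matrix.mul_apply, Fin.sum_univ_four, Matrix.vecHead,
        Matrix.vecTail, Function.comp] <;> ring
  refine ⟨h1, ?_⟩
  rw [h1]
  simp only [Matrix.trace, Matrix.diag, Fin.sum_univ_four]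
  simp [A₁, A₂, A₃, A₄, A₅, A₆, Matrix.mul_apply, Fin.sum_univ_four, Matrix.vecHead,
    Matrix.vecTail, Function.comp]
  ring
end
end

section
/- Let β ∈ (0, π) and α, γ ∈ [0, 2π), and set R := Rz(γ) · Ry(β) · Rz(α). Assume the rotation angle of R is less than π, i.e. trace(R) > −1. Then R₍₂,₁₎ = R₍₁,₂₎ if and only if α + γ = 0 or α + γ = 2π (i.e. if and only if α = −γ modulo 2π). Equivalently: the canonical coordinate c⁶ of R vanishes if and only if α = −γ. -/
noncomputable section

open Real Matrix

/-- Rotation matrix about the z-axis. -/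
def Rz (θ : ℝ) : Matrix (Fin 3) (Fin 3) ℝ :=
  !![cos θ, -sin θ, 0;
     sin θ,  cos θ, 0;
         0,      0, 1]

/-- Rotation matrix about the y-axis. -/
def Ry (θ : ℝ) : Matrix (Fin 3) (Fin 3) ℝ :=
  !![ cos θ, 0, sin θ;
         0,  1,     0;
     -sin θ, 0, cos θ]

/-- For `β ∈ (0, π)`, `α, γ ∈ [0, 2π)`, and `R = Rz(γ)·Ry(β)·Rz(α)` with
rotation angle less than `π` (i.e. `trace R > −1`), the antisymmetric part vanishes,
`R₍₂,₁₎ = R₍₁,₂₎` (equivalently `c⁶ = 0`), if and only if `α + γ = 0` or `α + γ = 2π`,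
i.e. iff `α = −γ` modulo `2π`.  This is the boxed equivalence in equation (4) of the
paper characterizing the section `σ` of `SE(3) → SE(3)/SO(2)`. -/
theorem stmt_8 (α β γ : ℝ) (hβ₀ : 0 < β) (hβπ : β < π)
    (hα : α ∈ Set.Ico 0 (2 * π)) (hγ : γ ∈ Set.Ico 0 (2 * π))
    (hq : Matrix.trace (Rz γ * Ry β * Rz α) > -1) :
    (Rz γ * Ry β * Rz α) 1 0 = (Rz γ * Ry β * Rz α) 0 1 ↔
      (α + γ = 0 ∨ α + γ = 2 * π) := by
  have key : (Rz γ * Ry β * Rz α) 1 0 - (Rz γ * Ry β * Rz α) 0 1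
      = (1 + cos β) * sin (α + γ) := by
    simp [Rz, Ry, Matrix.mul_apply, Fin.sum_univ_three, sin_add, cos_add]
    ring
  have htr : Matrix.trace (Rz γ * Ry β * Rz α)
      = (1 + cos β) * cos (α + γ) + cos β := by
    simp [Rz, Ry, Matrix.mul_apply, Fin.sum_univ_three, Matrix.trace_fin_three, sin_add, cos_add]
    ring
  have hcβ : -1 < cos β := by
    have := Real.cos_lt_cos_of_nonneg_of_le_pi hβ₀.le le_rfl hβπ
    simpa using this
  have hcb : 0 < 1 + cos β := by linarith
  rw [htr] at hq
  have hcos : -1 < cos (α + γ) := by nlinarith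
  constructor
  · intro h
    have hsin : sin (α + γ) = 0 := by
      have h0 : (1 + cos β) * sin (α + γ) = 0 := by linarith [key, sub_eq_zero.mpr h]
      exact (mul_eq_zero.mp h0).resolve_left (by positivity)
    have hone : cos (α + γ) = 1 := by
      have hsq := sin_sq_add_cos_sq (α + γ)
      rw [hsin] at hsq
      have hfac : (cos (α + γ) - 1) * (cos (α + γ) + 1) = 0 := by nlinarith
      rcases mul_eq_zero.mp hfac with h' | h'
      · linarith
      · linarith
    rcases Real.cos_eq_one_iff _ |>.mp hone with ⟨n, hn⟩
    have hπ : 0 < π := Real.pi_pos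
    have h1 : 0 ≤ α + γ := add_nonneg hα.1 hγ.1
    have h2 : α + γ < 4 * π := by linarith [hα.2, hγ.2]
    have hn0 : 0 ≤ n := by
      by_contra hneg
      push_neg at hneg
      have hn1 : n ≤ -1 := by omega
      have : (n : ℝ) ≤ -1 := by exact_mod_cast hn1
      nlinarith
    have hn2 : n < 2 := by
      by_contra hge
      push_neg at hge
      have : (2 : ℝ) ≤ (n : ℝ) := by exact_mod_cast hge
      nlinarith
    interval_cases n
    · left; simpa using hn.symm
    · right; rw [← hn]; push_cast; ring
  · rintro (h | h) <;>
    · have hs : sin (α + γ) = 0 := by rw [h]; simp [Real.sin_two_pi]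
      rw [← sub_eq_zero, key, hs, mul_zero]
end
end

section
/- Let s be the 4×4 matrix with upper-left 3×3 block S := diag(1, −1, 1) (the orthogonal reflection through the xz-plane), entry (4,4) equal to 1, and zeros elsewhere. Then: (i) for all c₁,...,c₆ ∈ ℝ, s · (c₁·A₁ + c₂·A₂ + c₃·A₃ + c₄·A₄ + c₅·A₅ + c₆·A₆) · s⁻¹ = c₁·A₁ − c₂·A₂ + c₃·A₃ − c₄·A₄ + c₅·A₅ − c₆·A₆ (conjugation by s flips exactly the coefficients of A₂, A₄, A₆); and (ii) for all α ∈ ℝ, denoting by h_α the 4×4 matrix with upper-left 3×3 block Rz(α), entry (4,4) equal to 1, and zeros elsewhere, one has s · h_α · s⁻¹ = h_{−α}. -/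
noncomputable section

open Matrix

open Real

/-- The reflection through the xz-plane, embedded in `E(3) ⊂ GL(4)`:
upper-left 3×3 block `diag(1, −1, 1)`, entry (4,4) equal to 1, zeros elsewhere. -/
def sRefl : Matrix (Fin 4) (Fin 4) ℝ :=
  !![1,  0, 0, 0;
     0, -1, 0, 0;
     0,  0, 1, 0;
     0,  0, 0, 1]

/-- Rotation about the z-axis over angle `α`, embedded in `SE(3) ⊂ GL(4)`. -/
def hRot (α : ℝ) : Matrix (Fin 4) (Fin 4) ℝ :=
  !![cos α, -sin α, 0, 0;
     sin α,  cos α, 0, 0;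
         0,      0, 1, 0;
         0,      0, 0, 1]

set_option maxHeartbeats 4000000 in
/-- (i) Conjugation by the reflection `s` flips exactly the coefficients
of `A₂, A₄, A₆` in `X = c₁·A₁ + ⋯ + c₆·A₆`; (ii) conjugation by `s` inverts the rotations
`h_α` about the z-axis: `s·h_α·s⁻¹ = h₋α`.  (Equation (15) of the paper, the core of
Lemma 2 on the reflectional symmetry of the logarithmic norm.) -/
theorem stmt_9 :
    (∀ c₁ c₂ c₃ c₄ c₅ c₆ : ℝ,
      sRefl * (c₁ • A₁ + c₂ • A₂ + c₃ • A₃ + c₄ • A₄ + c₅ • A₅ + c₆ • A₆) * sRefl⁻¹ =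
        c₁ • A₁ - c₂ • A₂ + c₃ • A₃ - c₄ • A₄ + c₅ • A₅ - c₆ • A₆) ∧
    (∀ α : ℝ, sRefl * hRot α * sRefl⁻¹ = hRot (-α)) := by
  have hinv : sRefl⁻¹ = sRefl := by
    apply Matrix.inv_eq_right_inv
    ext i j
    fin_cases i <;> fin_cases j <;>
      simp [sRefl, Matrix.mul_apply, Fin.sum_univ_four, Matrix.one_apply,
        Matrix.vecHead, Matrix.vecTail]
  have conj : ∀ X Y : Matrix (Fin 4) (Fin 4) ℝ,
      sRefl * X * sRefl = Y → sRefl * X * sRefl⁻¹ = Y := by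
    intro X Y h; rw [hinv, h]
  have h1 : sRefl * A₁ * sRefl⁻¹ = A₁ := by
    apply conj
    ext i j
    fin_cases i <;> fin_cases j <;>
      simp [sRefl, A₁, A₂, A₃, A₄, A₅, A₆, Matrix.mul_apply, Fin.sum_univ_four,
        Matrix.vecHead, Matrix.vecTail]
  have h2 : sRefl * A₂ * sRefl⁻¹ = -A₂ := by
    apply conj
    ext i j
    fin_cases i <;> fin_cases j <;>
      simp [sRefl, A₁, A₂, A₃, A₄, A₅, A₆, Matrix.mul_apply, Fin.sum_univ_four,
        Matrix.vecHead, Matrix.vecTail]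
  have h3 : sRefl * A₃ * sRefl⁻¹ = A₃ := by
    apply conj
    ext i j
    fin_cases i <;> fin_cases j <;>
      simp [sRefl, A₁, A₂, A₃, A₄, A₅, A₆, Matrix.mul_apply, Fin.sum_univ_four,
        Matrix.vecHead, Matrix.vecTail]
  have h4 : sRefl * A₄ * sRefl⁻¹ = -A₄ := by
    apply conj
    ext i j
    fin_cases i <;> fin_cases j <;>
      simp [sRefl, A₁, A₂, A₃, A₄, A₅, A₆, Matrix.mul_apply, Fin.sum_univ_four,
        Matrix.vecHead, Matrix.vecTail]
  have h5 : sRefl * A₅ * sRefl⁻¹ = A₅ := by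
    apply conj
    ext i j
    fin_cases i <;> fin_cases j <;>
      simp [sRefl, A₁, A₂, A₃, A₄, A₅, A₆, Matrix.mul_apply, Fin.sum_univ_four,
        Matrix.vecHead, Matrix.vecTail]
  have h6 : sRefl * A₆ * sRefl⁻¹ = -A₆ := by
    apply conj
    ext i j
    fin_cases i <;> fin_cases j <;>
      simp [sRefl, A₁, A₂, A₃, A₄, A₅, A₆, Matrix.mul_apply, Fin.sum_univ_four,
        Matrix.vecHead, Matrix.vecTail]
  constructor
  · intro c₁ c₂ c₃ c₄ c₅ c₆
    have expand : ∀ X : Matrix (Fin 4) (Fin 4) ℝ, sRefl * X * sRefl⁻¹ =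
        sRefl * X * sRefl := by intro X; rw [hinv]
    simp only [Matrix.mul_add, Matrix.add_mul, Matrix.mul_smul, Matrix.smul_mul, expand]
    rw [← expand A₁, ← expand A₂, ← expand A₃, ← expand A₄, ← expand A₅, ← expand A₆,
      h1, h2, h3, h4, h5, h6]
    module
  · intro α
    rw [hinv]
    ext i j
    fin_cases i <;> fin_cases j <;>
      simp [sRefl, hRot, Matrix.mul_apply, Fin.sum_univ_four,
        Matrix.vecHead, Matrix.vecTail]
end
end

section
/- The function f(q) := (1 − (q/2)·cot(q/2))/q² is strictly monotone increasing on the interval (0, π), i.e. for all q₁, q₂ with 0 < q₁ < q₂ < π one has f(q₁) < f(q₂). -/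
open Real

private lemma mono_aux {g g' : ℝ → ℝ} (hc : Continuous g)
    (hd : ∀ x, HasDerivAt g (g' x) x)
    (hp : ∀ x ∈ Set.Ioo (0:ℝ) π, 0 < g' x) (hg0 : g 0 = 0)
    {t : ℝ} (ht : t ∈ Set.Ioo (0:ℝ) π) : 0 < g t := by
  have hmono : StrictMonoOn g (Set.Icc 0 π) := by
    apply strictMonoOn_of_deriv_pos (convex_Icc 0 π) hc.continuousOn
    intro x hx
    rw [interior_Icc] at hx
    rw [(hd x).deriv]
    exact hp x hx
  have := hmono (Set.left_mem_Icc.2 Real.pi_pos.le) ⟨ht.1.le, ht.2.le⟩ ht.1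
  rwa [hg0] at this

private lemma m_pos {t : ℝ} (ht : t ∈ Set.Ioo (0:ℝ) π) : 0 < sin t - t * cos t := by
  apply mono_aux (by continuity) (g' := fun t => t * sin t) ?_ ?_ (by simp) ht
  · intro x
    have h2 : HasDerivAt (fun t : ℝ => t * cos t) (1 * cos x + x * (-sin x)) x :=
      (hasDerivAt_id x).mul (Real.hasDerivAt_cos x)
    have := (Real.hasDerivAt_sin x).sub h2
    exact this.congr_deriv (by ring)
  · intro x hx
    exact mul_pos hx.1 (Real.sin_pos_of_pos_of_lt_pi hx.1 hx.2)

private lemma k2_pos {t : ℝ} (ht : t ∈ Set.Ioo (0:ℝ) π) : 0 < 2 - 2 * cos t - t * sin t := by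
  apply mono_aux (by continuity) (g' := fun t => sin t - t * cos t) ?_
    (fun x hx => m_pos hx) (by simp) ht
  intro x
  have h2 : HasDerivAt (fun t : ℝ => t * sin t) (1 * sin x + x * cos x) x :=
    (hasDerivAt_id x).mul (Real.hasDerivAt_sin x)
  have := ((hasDerivAt_const x (2:ℝ)).sub ((Real.hasDerivAt_cos x).const_mul 2)).sub h2
  exact this.congr_deriv (by ring)

private lemma k1_pos {t : ℝ} (ht : t ∈ Set.Ioo (0:ℝ) π) :
    0 < 2 * t - 3 * sin t + t * cos t := by
  apply mono_aux (by continuity) (g' := fun t => 2 - 2 * cos t - t * sin t) ?_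
    (fun x hx => k2_pos hx) (by simp) ht
  intro x
  have h2 : HasDerivAt (fun t : ℝ => t * cos t) (1 * cos x + x * (-sin x)) x :=
    (hasDerivAt_id x).mul (Real.hasDerivAt_cos x)
  have := (((hasDerivAt_id x).const_mul (2:ℝ)).sub
    ((Real.hasDerivAt_sin x).const_mul 3)).add h2
  exact this.congr_deriv (by ring)

private lemma k_pos {t : ℝ} (ht : t ∈ Set.Ioo (0:ℝ) π) :
    0 < t ^ 2 + t * sin t + 4 * cos t - 4 := by
  apply mono_aux (by continuity) (g' := fun t => 2 * t - 3 * sin t + t * cos t) ?_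
    (fun x hx => k1_pos hx) (by simp) ht
  intro x
  have h1 : HasDerivAt (fun t : ℝ => t ^ 2) (2 * x) x := by
    simpa using hasDerivAt_pow 2 x
  have h2 : HasDerivAt (fun t : ℝ => t * sin t) (1 * sin x + x * cos x) x :=
    (hasDerivAt_id x).mul (Real.hasDerivAt_sin x)
  have h3 : HasDerivAt (fun t : ℝ => 4 * cos t) (4 * (-sin x)) x :=
    (Real.hasDerivAt_cos x).const_mul 4
  have := ((h1.add h2).add h3).sub_const 4
  exact this.congr_deriv (by ring)

/-- The function `f(q) = (1 − (q/2)·cot(q/2))/q²`, appearing in the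
`SE(3)` logarithm formula (equation (16) of the paper), is strictly monotone increasing
on the interval `(0, π)`. -/
theorem stmt_12 :
    StrictMonoOn (fun q : ℝ => (1 - q / 2 * (cos (q / 2) / sin (q / 2))) / q ^ 2)
      (Set.Ioo 0 π) := by
  have hsin : ∀ q ∈ Set.Ioo (0:ℝ) π, 0 < sin (q / 2) := by
    intro q hq
    exact Real.sin_pos_of_pos_of_lt_pi (by linarith [hq.1]) (by linarith [hq.2, Real.pi_pos])
  apply strictMonoOn_of_deriv_pos (convex_Ioo 0 π)
  · apply ContinuousOn.div
    · apply ContinuousOn.sub continuousOn_const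
      apply ContinuousOn.mul (by fun_prop)
      exact ContinuousOn.div (by fun_prop) (by fun_prop) (fun q hq => (hsin q hq).ne')
    · fun_prop
    · intro q hq
      exact pow_ne_zero 2 hq.1.ne'
  · intro q hq
    rw [interior_Ioo] at hq
    obtain ⟨hq0, hqπ⟩ := hq
    set s := sin (q / 2) with hs_def
    set c := cos (q / 2) with hc_def
    have hs : 0 < s := hsin q ⟨hq0, hqπ⟩
    have hc' : HasDerivAt (fun q : ℝ => cos (q / 2)) (-sin (q / 2) * (1 / 2)) q :=
      by have := (Real.hasDerivAt_cos (q / 2)).comp q ((hasDerivAt_id q).div_const 2); exact this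
    have hs' : HasDerivAt (fun q : ℝ => sin (q / 2)) (cos (q / 2) * (1 / 2)) q :=
      by have := (Real.hasDerivAt_sin (q / 2)).comp q ((hasDerivAt_id q).div_const 2); exact this
    have hratio := hc'.div hs' hs.ne'
    have hhalf : HasDerivAt (fun q : ℝ => q / 2) (1 / 2) q := (hasDerivAt_id q).div_const 2
    have hmul := hhalf.mul hratio
    have hnum := (hasDerivAt_const q (1:ℝ)).sub hmul
    have hden : HasDerivAt (fun q : ℝ => q ^ 2) (2 * q) q := by
      simpa using hasDerivAt_pow 2 q
    have hf := hnum.div hden (pow_ne_zero 2 hq0.ne')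
    have hpyth : s ^ 2 + c ^ 2 = 1 := Real.sin_sq_add_cos_sq (q / 2)
    have hk := k_pos ⟨hq0, hqπ⟩
    have h2 : sin q = 2 * s * c := by
      rw [hs_def, hc_def, ← Real.sin_two_mul]; ring_nf
    have h3 : cos q = 2 * c ^ 2 - 1 := by
      rw [hc_def, ← Real.cos_two_mul]; ring_nf
    rw [h2, h3] at hk
    have hN : 0 < q ^ 2 / 4 + q / 2 * s * c - 2 * s ^ 2 := by nlinarith [hk, hpyth]
    have hf2 : HasDerivAt (fun q : ℝ => (1 - q / 2 * (cos (q / 2) / sin (q / 2))) / q ^ 2)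
        ((q ^ 2 / 4 + q / 2 * s * c - 2 * s ^ 2) / (s ^ 2 * q ^ 3)) q := by
      refine hf.congr_deriv ?_
      simp only [Pi.div_apply, Pi.sub_apply, Pi.mul_apply]
      rw [← hs_def, ← hc_def]
      have hkey : (-s * (1 / 2) * s - c * (c * (1 / 2))) = -(1 / 2) := by
        linear_combination (-(1 / 2) : ℝ) * hpyth
      rw [hkey]
      field_simp
      ring
    rw [hf2.deriv]
    exact div_pos hN (by positivity)
end
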